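/- Let L be a finite meet-semilattice, G a building set of L, and N ⊆ G. Then N is nested if and only if for every set {x₁,…,x_t} of pairwise incomparable elements of N with t ≥ 2, the join x₁∨…∨x_t exists in L and F(x₁∨…∨x_t) = {x₁,…,x_t}. -/

import Mathlib

attribute [local instance] Classical.propDecidable

universe u

/-- The set of maximal elements of `G` below `x`. -/
def maxBelow {L : Type u} [PartialOrder L] (G : Set L) (x : L) : Set L :=
  {g | g ∈ G ∧ g ≤ x ∧ ∀ h ∈ G, h ≤ x → g ≤ h → h = g}

/-- The tuple in the product of lower intervals which is `g` in the coordinate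
indexed by `g` and bottom elsewhere. -/
noncomputable def deltaTuple {L : Type u} [PartialOrder L] [OrderBot L] (G : Set L) (x : L)
    (g : maxBelow G x) : (h : maxBelow G x) → Set.Iic (h : L) :=
  fun h => if (h : L) = (g : L) then ⟨(h : L), le_refl _⟩ else ⟨⊥, bot_le⟩

/-- `G` is a (combinatorial) building set: `G` avoids the bottom element, and for every
`x ≠ ⊥` the interval `[⊥, x]` decomposes as the product of the intervals below the maximal
elements of `G` below `x`, via an isomorphism sending delta tuples to the corresponding
maximal elements. -/
def IsBuilding {L : Type u} [PartialOrder L] [OrderBot L] (G : Set L) : Prop :=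
  (∀ g ∈ G, g ≠ ⊥) ∧
  ∀ x : L, x ≠ ⊥ →
    ∃ φ : ((h : maxBelow G x) → Set.Iic (h : L)) ≃o Set.Iic x,
      ∀ g : maxBelow G x, ((φ (deltaTuple G x g) : Set.Iic x) : L) = (g : L)

/-- A subset `N` of a building set `G` is nested if for every finite set of at least two
pairwise incomparable elements of `N`, the join exists and does not belong to `G`. -/
def IsNested {L : Type u} [PartialOrder L] (G N : Set L) : Prop :=
  N ⊆ G ∧ ∀ T : Finset L, ↑T ⊆ N → 2 ≤ T.card →
    (∀ a ∈ T, ∀ b ∈ T, a ≠ b → ¬ a ≤ b) →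
    ∃ j : L, IsLUB (↑T : Set L) j ∧ j ∉ G

section Aux

variable {L : Type u} [SemilatticeInf L] [Fintype L] [OrderBot L]

/-- Every element of `G` below `x` lies below some maximal element of `G` below `x`. -/
lemma exists_factor_above {G : Set L} {x g : L} (hg : g ∈ G) (hgx : g ≤ x) :
    ∃ y : maxBelow G x, g ≤ (y : L) := by
  obtain ⟨m, hm, hmax⟩ := Set.Finite.exists_maximalFor id {h | h ∈ G ∧ g ≤ h ∧ h ≤ x}
    (Set.toFinite _) ⟨g, hg, le_rfl, hgx⟩
  exact ⟨⟨m, hm.1, hm.2.2, fun h hhG hhx hmh =>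
    le_antisymm (hmax ⟨hhG, hm.2.1.trans hmh, hhx⟩ hmh) hmh⟩, hm.2.1⟩

/-- The main work for the forward direction: if `T` is an antichain in a nested set and
`j` is its join, then the set of factors of `j` is exactly `T`. -/
lemma factors_eq_of_isLUB {G N : Set L} (hG : IsBuilding G) (hN : N ⊆ G)
    (hnest : ∀ T : Finset L, ↑T ⊆ N → 2 ≤ T.card →
      (∀ a ∈ T, ∀ b ∈ T, a ≠ b → ¬ a ≤ b) → ∃ j : L, IsLUB (↑T : Set L) j ∧ j ∉ G)
    (T : Finset L) (hTN : ↑T ⊆ N) (hcard : 2 ≤ T.card)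
    (hanti : ∀ a ∈ T, ∀ b ∈ T, a ≠ b → ¬ a ≤ b)
    {j : L} (hj : IsLUB (↑T : Set L) j) : maxBelow G j = ↑T := by
  have hTG : ∀ t ∈ T, t ∈ G := fun t ht => hN (hTN (Finset.mem_coe.mpr ht))
  have hle : ∀ t ∈ T, t ≤ j := fun t ht => hj.1 (Finset.mem_coe.mpr ht)
  obtain ⟨t0, ht0⟩ : T.Nonempty := Finset.card_pos.mp (by omega)
  have hjbot : j ≠ ⊥ := by
    intro h
    exact hG.1 t0 (hTG t0 ht0) (le_bot_iff.mp (h ▸ hle t0 ht0))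
  obtain ⟨φ, hφ⟩ := hG.2 j hjbot
  -- the set of elements of `T` inside the interval `[⊥, j]`
  set TS : Set (Set.Iic j) := {b | (b : L) ∈ T} with hTS
  set A : Set ((h : maxBelow G j) → Set.Iic (h : L)) := φ.symm '' TS with hA
  -- `⊤` is the least upper bound of `TS` inside `[⊥, j]`
  have hTop : IsLUB TS (⊤ : Set.Iic j) := by
    constructor
    · exact fun b _ => le_top
    · rintro ⟨u, hu⟩ hub
      have huu : j ≤ u := by
        refine hj.2 fun t ht => ?_
        exact Subtype.coe_le_coe.mpr (hub (show (⟨t, hj.1 ht⟩ : Set.Iic j) ∈ TS from ht))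
      exact Subtype.mk_le_mk.mpr huu
  have hAtop : IsLUB A (⊤ : (h : maxBelow G j) → Set.Iic (h : L)) := by
    have := (φ.symm.isLUB_image' (s := TS) (x := (⊤ : Set.Iic j))).mpr hTop
    rwa [OrderIso.map_top] at this
  -- coordinates of `φ.symm b` away from the factor of `b` vanish
  have hdelta_le : ∀ (y : maxBelow G j) (b : Set.Iic j), (b : L) ≤ (y : L) →
      φ.symm b ≤ deltaTuple G j y := by
    intro y b hby
    have h1 : b ≤ φ (deltaTuple G j y) := by
      rw [← Subtype.coe_le_coe, hφ y]; exact hby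
    have := φ.symm.monotone h1
    rwa [OrderIso.symm_apply_apply] at this
  have hbcoord : ∀ (y : maxBelow G j) (b : Set.Iic j), (b : L) ∈ T → ¬ (b : L) ≤ (y : L) →
      φ.symm b y = ⊥ := by
    intro y b hbT hby
    obtain ⟨y', hy'⟩ := exists_factor_above (hTG _ hbT) b.2
    have hyy' : (y : L) ≠ (y' : L) := fun h => hby (h ▸ hy')
    have h2 := hdelta_le y' b hy' y
    rw [deltaTuple, if_neg hyy'] at h2
    exact le_bot_iff.mp h2
  -- each factor is the least upper bound of the elements of `T` below it
  have hlub : ∀ y : maxBelow G j,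
      IsLUB (↑(T.filter fun t => t ≤ (y : L)) : Set L) (y : L) := by
    intro y
    set S : Set (Set.Iic j) := {b | (b : L) ∈ T ∧ (b : L) ≤ (y : L)} with hS
    have hAy : IsLUB (φ.symm '' S) (deltaTuple G j y) := by
      constructor
      · rintro a ⟨b, ⟨hbT, hby⟩, rfl⟩
        exact hdelta_le y b hby
      · intro u hu h
        by_cases hh : (h : L) = (y : L)
        · have hhy : h = y := Subtype.ext hh
          subst hhy
          -- goal: deltaTuple G j h h ≤ u h
          -- construct the tuple `v` agreeing with `u` at `h` and maximal elsewhere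
          set v : (h' : maxBelow G j) → Set.Iic (h' : L) := fun h' =>
            ⟨if (h' : L) = (h : L) then (u h : L) else (h' : L), by
              split_ifs with hc
              · rw [hc]; exact (u h).2
              · exact le_rfl⟩ with hv
          have hvA : v ∈ upperBounds A := by
            rintro a ⟨b, hbT, rfl⟩
            intro h'
            rw [← Subtype.coe_le_coe]
            show (φ.symm b h' : L) ≤ if (h' : L) = (h : L) then (u h : L) else (h' : L)
            by_cases hc : (h' : L) = (h : L)
            · have hch : h' = h := Subtype.ext hc
              subst hch
              rw [if_pos rfl]
              by_cases hby : (b : L) ≤ (h' : L)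
              · exact Subtype.coe_le_coe.mpr (hu ⟨b, ⟨hbT, hby⟩, rfl⟩ h')
              · rw [hbcoord h' b hbT hby]
                exact bot_le
            · rw [if_neg hc]
              exact (φ.symm b h').2
          have h3 := hAtop.2 hvA h
          rw [← Subtype.coe_le_coe] at h3
          have h4 : ((⊤ : (h' : maxBelow G j) → Set.Iic (h' : L)) h : L) = (h : L) := rfl
          rw [h4] at h3
          show deltaTuple G j h h ≤ u h
          rw [deltaTuple, if_pos rfl, ← Subtype.coe_le_coe]
          calc ((⟨(h : L), le_refl _⟩ : Set.Iic (h : L)) : L) = (h : L) := rfl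
            _ ≤ (v h : L) := h3
            _ = (u h : L) := by rw [hv]; simp
        · rw [deltaTuple, if_neg hh]
          exact bot_le
    -- transport through `φ`
    have himg : φ '' (φ.symm '' S) = S := by
      ext b; constructor
      · rintro ⟨a, ⟨c, hc, rfl⟩, rfl⟩
        rwa [OrderIso.apply_symm_apply]
      · intro hb
        exact ⟨φ.symm b, ⟨b, hb, rfl⟩, (OrderIso.apply_symm_apply φ b)⟩
    have hS' : IsLUB S (⟨(y : L), y.2.2.1⟩ : Set.Iic j) := by
      have := (φ.isLUB_image' (s := φ.symm '' S) (x := deltaTuple G j y)).mpr hAy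
      rw [himg] at this
      have heq : φ (deltaTuple G j y) = (⟨(y : L), y.2.2.1⟩ : Set.Iic j) :=
        Subtype.ext (hφ y)
      rwa [heq] at this
    constructor
    · intro t ht
      rw [Finset.mem_coe, Finset.mem_filter] at ht
      exact ht.2
    · intro u hu
      have h1 : (⟨u ⊓ j, inf_le_right⟩ : Set.Iic j) ∈ upperBounds S := by
        rintro b ⟨hbT, hby⟩
        rw [← Subtype.coe_le_coe]
        exact le_inf (hu (by rw [Finset.mem_coe, Finset.mem_filter]; exact ⟨hbT, hby⟩)) b.2
      have := hS'.2 h1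
      rw [← Subtype.coe_le_coe] at this
      exact le_trans this inf_le_left
  -- each element of `T` below a factor equals that factor
  have hkey : ∀ (y : maxBelow G j) (t : L), t ∈ T → t ≤ (y : L) → t = (y : L) := by
    intro y t htT hty
    set Sf : Finset L := T.filter (fun t => t ≤ (y : L)) with hSf
    have htS : t ∈ Sf := Finset.mem_filter.mpr ⟨htT, hty⟩
    by_cases h2 : 2 ≤ Sf.card
    · exfalso
      have hSfN : ↑Sf ⊆ N := fun x hx => by
        rw [Finset.mem_coe, Finset.mem_filter] at hx
        exact hTN (Finset.mem_coe.mpr hx.1)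
      have hSfanti : ∀ a ∈ Sf, ∀ b ∈ Sf, a ≠ b → ¬ a ≤ b := fun a ha b hb hab =>
        hanti a (Finset.mem_filter.mp ha).1 b (Finset.mem_filter.mp hb).1 hab
      obtain ⟨j', hj', hj'G⟩ := hnest Sf hSfN h2 hSfanti
      have hj'y : j' = (y : L) := hj'.unique (hlub y)
      rw [hj'y] at hj'G
      exact hj'G y.2.1
    · have h1 : Sf.card = 1 := by
        have : 0 < Sf.card := Finset.card_pos.mpr ⟨t, htS⟩
        omega
      obtain ⟨a, ha⟩ := Finset.card_eq_one.mp h1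
      have hta : t = a := by
        rw [ha, Finset.mem_singleton] at htS
        exact htS
      have hl : IsLUB ({a} : Set L) (y : L) := by
        have := hlub y
        rw [← hSf, ha] at this
        simpa using this
      have hya : (y : L) = a := hl.unique isLUB_singleton
      rw [hta, hya]
  -- conclude
  ext x
  constructor
  · intro hx
    set y : maxBelow G j := ⟨x, hx⟩ with hy
    by_cases hex : ∃ t ∈ T, t ≤ x
    · obtain ⟨t, htT, htx⟩ := hex
      have hx' : t = x := hkey y t htT htx
      rw [Finset.mem_coe, ← hx']
      exact htT
    · exfalso
      have hl := hlub y
      have hempty : (T.filter fun t => t ≤ (y : L)) = ∅ := by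
        rw [Finset.filter_eq_empty_iff]
        intro t ht hle'
        exact hex ⟨t, ht, hle'⟩
      rw [hempty] at hl
      simp only [Finset.coe_empty] at hl
      have hxb : x ≤ ⊥ := hl.2 (by intro b hb; exact absurd hb (Set.notMem_empty b))
      exact hG.1 x hx.1 (le_bot_iff.mp hxb)
  · intro hx
    have hxT : x ∈ T := Finset.mem_coe.mp hx
    obtain ⟨y, hxy⟩ := exists_factor_above (hTG x hxT) (hle x hxT)
    have := hkey y x hxT hxy
    rw [this]
    exact y.2

end Aux

/-- `N ⊆ G` is nested iff for every finite antichain `T ⊆ N` with at least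
two elements, the join of `T` exists and its set of factors is exactly `T`. -/
theorem isNested_iff_factors_of_antichain_joins {L : Type u} [SemilatticeInf L] [Fintype L]
    [OrderBot L] (G : Set L) (hG : IsBuilding G) (N : Set L) (hN : N ⊆ G) :
    IsNested G N ↔
      ∀ T : Finset L, ↑T ⊆ N → 2 ≤ T.card →
        (∀ a ∈ T, ∀ b ∈ T, a ≠ b → ¬ a ≤ b) →
        ∃ j : L, IsLUB (↑T : Set L) j ∧ maxBelow G j = ↑T := by
  constructor
  · rintro ⟨-, hnest⟩ T hTN hcard hanti
    obtain ⟨j, hj, -⟩ := hnest T hTN hcard hanti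
    exact ⟨j, hj, factors_eq_of_isLUB hG hN hnest T hTN hcard hanti hj⟩
  · intro h
    refine ⟨hN, fun T hTN hcard hanti => ?_⟩
    obtain ⟨j, hj, hFac⟩ := h T hTN hcard hanti
    refine ⟨j, hj, fun hjG => ?_⟩
    have hjmax : j ∈ maxBelow G j :=
      ⟨hjG, le_rfl, fun h' _ hle hge => le_antisymm hle hge⟩
    rw [hFac, Finset.mem_coe] at hjmax
    obtain ⟨b, hbT, hbj⟩ : ∃ b ∈ T, b ≠ j := by
      by_contra h'
      push_neg at h'
      have hsub : T ⊆ {j} := fun a ha => Finset.mem_singleton.mpr (h' a ha)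
      have := Finset.card_le_card hsub
      simp at this
      omega
    exact hanti b hbT j hjmax hbj (hj.1 (Finset.mem_coe.mpr hbT))
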